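/- Define g(x) = x(x-3)·ln(x) - (x-2)·ln(2) - (x-1)(x-2)·ln(x-2) for real x ≥ 3. Then g(x) ≥ 0 for all real x ≥ 4. -/

import Mathlib

lemma log_ratio_ge (t : ℝ) (h0 : 0 ≤ t) (h1 : t < 1) :
    2*t ≤ Real.log (1+t) - Real.log (1-t) := by
  set f : ℝ → ℝ := fun s => Real.log (1+s) - Real.log (1-s) - 2*s with hf
  have hd : ∀ s ∈ Set.Ico (0:ℝ) 1, HasDerivAt f (1/(1+s) + 1/(1-s) - 2) s := by
    intro s hs
    obtain ⟨hs0, hs1⟩ := hs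
    have h1s : (0:ℝ) < 1 + s := by linarith
    have h2s : (0:ℝ) < 1 - s := by linarith
    have d1 : HasDerivAt (fun s : ℝ => Real.log (1+s)) (1/(1+s)) s := by
      have := (Real.hasDerivAt_log h1s.ne').comp s ((hasDerivAt_id s).const_add 1)
      simpa [Function.comp_def] using this
    have d2 : HasDerivAt (fun s : ℝ => Real.log (1-s)) (-(1/(1-s))) s := by
      have hid : HasDerivAt (fun s : ℝ => 1 - s) (-1) s := by
        exact (hasDerivAt_id' s).const_sub 1
      have := (Real.hasDerivAt_log h2s.ne').comp s hid
      simpa [Function.comp_def] using this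
    have := (d1.sub d2).sub ((hasDerivAt_id' s).const_mul 2)
    rw [hf]; exact this.congr_deriv (by ring)
  have hmono : MonotoneOn f (Set.Ico (0:ℝ) 1) := by
    apply monotoneOn_of_deriv_nonneg (convex_Ico 0 1)
    · exact fun s hs => (hd s hs).continuousAt.continuousWithinAt
    · rw [interior_Ico]
      exact fun s hs => (hd s (Set.Ioo_subset_Ico_self hs)).differentiableAt.differentiableWithinAt
    · rw [interior_Ico]
      intro s hs
      rw [(hd s (Set.Ioo_subset_Ico_self hs)).deriv]
      obtain ⟨hs0, hs1⟩ := hs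
      have h1s : (0:ℝ) < 1 + s := by linarith
      have h2s : (0:ℝ) < 1 - s := by linarith
      have : 1/(1+s) + 1/(1-s) - 2 = 2*s^2/((1+s)*(1-s)) := by
        field_simp; ring
      rw [this]; positivity
  have h00 : (0:ℝ) ∈ Set.Ico (0:ℝ) 1 := ⟨le_refl 0, one_pos⟩
  have ht : t ∈ Set.Ico (0:ℝ) 1 := ⟨h0, h1⟩
  have := hmono h00 ht h0
  simp [hf] at this
  linarith

lemma log_sub_log_ge (a b : ℝ) (hb : 0 < b) (hab : b ≤ a) :
    2*(a-b)/(a+b) ≤ Real.log a - Real.log b := by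
  have ha : 0 < a := lt_of_lt_of_le hb hab
  have hab2 : 0 < a + b := by linarith
  set t := (a-b)/(a+b) with htdef
  have ht0 : 0 ≤ t := div_nonneg (by linarith) hab2.le
  have ht1 : t < 1 := by rw [htdef, div_lt_one hab2]; linarith
  have h1t : 1 + t = (2*a)/(a+b) := by rw [htdef]; field_simp; ring
  have h2t : 1 - t = (2*b)/(a+b) := by rw [htdef]; field_simp; ring
  have key := log_ratio_ge t ht0 ht1
  rw [h1t, h2t, Real.log_div (by positivity) hab2.ne',
    Real.log_div (by positivity) hab2.ne',
    Real.log_mul two_ne_zero ha.ne', Real.log_mul two_ne_zero hb.ne'] at key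
  have : 2*(a-b)/(a+b) = 2*t := by rw [htdef]; ring
  linarith

theorem stmt_4 (x : ℝ) (hx : 4 ≤ x) :
    0 ≤ x * (x - 3) * Real.log x - (x - 2) * Real.log 2
      - (x - 1) * (x - 2) * Real.log (x - 2) := by
  have hx0 : (0:ℝ) < x := by linarith
  have hx2 : (0:ℝ) < x - 2 := by linarith
  have hl2u : Real.log 2 < 0.6931471808 := Real.log_two_lt_d9
  have hl2l : 0.6931471803 < Real.log 2 := Real.log_two_gt_d9
  have hlog4 : Real.log 4 = 2 * Real.log 2 := by
    rw [show (4:ℝ) = 2^2 by norm_num, Real.log_pow]; push_cast; ring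
  -- tangent upper bound for log x at 4
  have hlxu : Real.log x ≤ 2*Real.log 2 + x/4 - 1 := by
    have h4 : Real.log (x/4) ≤ x/4 - 1 := Real.log_le_sub_one_of_pos (by positivity)
    rw [Real.log_div hx0.ne' (by norm_num), hlog4] at h4
    linarith
  rcases le_or_gt x (21/5) with hc | hc
  · -- small regime 4 ≤ x ≤ 4.2
    have hlxl : x*(2*Real.log 2) - x*Real.log x ≤ 4 - x := by
      have h4 : Real.log (4/x) ≤ 4/x - 1 := Real.log_le_sub_one_of_pos (by positivity)
      have := mul_le_mul_of_nonneg_left h4 hx0.le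
      rw [Real.log_div (by norm_num) hx0.ne', hlog4] at this
      have hxx : x * (4/x - 1) = 4 - x := by field_simp
      nlinarith [this]
    have hlx2 : Real.log (x-2) ≤ Real.log 2 + (x-4)/2 := by
      have h4 : Real.log ((x-2)/2) ≤ (x-2)/2 - 1 := Real.log_le_sub_one_of_pos (by positivity)
      rw [Real.log_div hx2.ne' two_ne_zero] at h4
      linarith
    have e3 : (x-3)*(x*(2*Real.log 2) - x*Real.log x) ≤ (x-3)*(4-x) :=
      mul_le_mul_of_nonneg_left hlxl (by linarith)
    have e4 : (x-1)*(x-2)*Real.log (x-2) ≤ (x-1)*(x-2)*(Real.log 2 + (x-4)/2) :=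
      mul_le_mul_of_nonneg_left hlx2 (by nlinarith)
    have hu : (0:ℝ) ≤ x - 4 := by linarith
    have hv : (0:ℝ) ≤ 21/5 - x := by linarith
    have key : 0 ≤ (x-4) * (x*Real.log 2 + x - 3 - (x^2-3*x+2)/2) := by
      apply mul_nonneg hu
      nlinarith [mul_nonneg hu hv, mul_nonneg hx0.le (show (0:ℝ) ≤ Real.log 2 - 0.6931 by linarith)]
    linarith [e3, e4, key]
  · -- large regime x ≥ 4.2
    have h1 := log_sub_log_ge x (x-2) hx2 (by linarith)
    have h1' : 2/(x-1) ≤ Real.log x - Real.log (x-2) := by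
      have heq : 2*(x-(x-2))/(x+(x-2)) = 2/(x-1) := by
        rw [div_eq_div_iff (by linarith) (by linarith)]; ring
      rw [heq] at h1; exact h1
    have e1 : 2*(x-2) ≤ (x-1)*(x-2)*(Real.log x - Real.log (x-2)) := by
      have h := mul_le_mul_of_nonneg_left h1' (show (0:ℝ) ≤ (x-1)*(x-2) by nlinarith)
      have heq : (x-1)*(x-2)*(2/(x-1)) = 2*(x-2) := by
        have hne : x - 1 ≠ 0 := by linarith
        field_simp
      linarith [heq ▸ h]
    nlinarith [e1, hlxu, hl2u, hl2l,
      mul_nonneg (show (0:ℝ) ≤ x - 21/5 by linarith)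
        (show (0:ℝ) ≤ 0.6932 - Real.log 2 by linarith)]
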